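/- Let X be a Banach space and let (A_m)_{m≥0} be a sequence of bounded linear operators on X admitting an exponential dichotomy on ℤ₀⁺ with constants C, λ > 0. Then the linear system x_{n+1} = A_n x_n, n ≥ 0, has the ℓ^∞-Lipschitz shadowing property: there exists L > 0 such that for every ε > 0 and every sequence (y_n)_{n≥0} ⊂ X with sup_{n≥0} ‖y_{n+1} − A_n y_n‖ ≤ Lε, there exists a sequence (x_n)_{n≥0} with x_{n+1} = A_n x_n for all n ≥ 0 and sup_{n≥0} ‖x_n − y_n‖ ≤ ε. -/

import Mathlib

/-- The forward products `𝒜(m,n) = A_{m-1} ⋯ A_n` for `m ≥ n ≥ 0`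
(equal to the identity when `m ≤ n`). -/
noncomputable def calAN {X : Type*} [NormedAddCommGroup X] [NormedSpace ℝ X]
    (A : ℕ → X →L[ℝ] X) (m n : ℕ) : X →L[ℝ] X :=
  (List.range (m - n)).foldl (fun B k => (A (n + k)).comp B)
    (ContinuousLinearMap.id ℝ X)

/-- The sequence `(A_m)_{m ≥ 0}` admits an exponential dichotomy on `ℤ₀⁺` with constants
`C, lam > 0`.  For `m ≤ n`, the operator `𝒜(m,n)` (the inverse of `𝒜(n,m)` restricted to
`Ker P_m`) is described implicitly: `w = 𝒜(m,n)(Id - P_n) x` iff `w ∈ Ker P_m` and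
`𝒜(n,m) w = x - P_n x`. -/
def ExpDichotomyN {X : Type*} [NormedAddCommGroup X] [NormedSpace ℝ X]
    (A : ℕ → X →L[ℝ] X) (C lam : ℝ) : Prop :=
  ∃ P : ℕ → X →L[ℝ] X,
    (∀ m, (P m).comp (P m) = P m) ∧
    (∀ m, (P (m + 1)).comp (A m) = (A m).comp (P m)) ∧
    (∀ m, Set.BijOn (A m) (LinearMap.ker (P m : X →ₗ[ℝ] X) : Set X)
      (LinearMap.ker (P (m + 1) : X →ₗ[ℝ] X) : Set X)) ∧
    (∀ m n : ℕ, n ≤ m → ‖(calAN A m n).comp (P n)‖ ≤ C * Real.exp (-lam * ((m : ℝ) - n))) ∧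
    (∀ m n : ℕ, m ≤ n → ∀ x w : X, w ∈ LinearMap.ker (P m : X →ₗ[ℝ] X) →
      calAN A n m w = x - P n x → ‖w‖ ≤ C * Real.exp (-lam * ((n : ℝ) - m)) * ‖x‖)

section aux
variable {X : Type*} [NormedAddCommGroup X] [NormedSpace ℝ X]

lemma calAN_self (A : ℕ → X →L[ℝ] X) (n : ℕ) :
    calAN A n n = ContinuousLinearMap.id ℝ X := by
  simp [calAN]

lemma calAN_succ_left (A : ℕ → X →L[ℝ] X) {m n : ℕ} (h : n ≤ m) :
    calAN A (m + 1) n = (A m).comp (calAN A m n) := by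
  unfold calAN
  rw [show m + 1 - n = (m - n) + 1 from by omega, List.range_succ, List.foldl_append]
  simp only [List.foldl_cons, List.foldl_nil]
  rw [Nat.add_sub_cancel' h]

lemma calAN_succ_right (A : ℕ → X →L[ℝ] X) {m n : ℕ} (h : n < m) :
    calAN A m n = (calAN A m (n + 1)).comp (A n) := by
  induction m, h using Nat.le_induction with
  | base =>
    rw [calAN_succ_left A le_rfl, calAN_self, calAN_self]
    ext x; simp
  | succ m hm ih =>
    rw [calAN_succ_left A (by omega : n ≤ m), ih,
      calAN_succ_left A (by omega : n + 1 ≤ m)]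
    ext x; simp

end aux

/-- Corollary 4.2: if `(A_m)_{m≥0}` admits an exponential dichotomy on `ℤ₀⁺`, then the linear
system `x_{n+1} = A_n x_n`, `n ≥ 0`, has the `ℓ^∞`-Lipschitz shadowing property. -/
theorem one_sided_linear_lipschitz_shadowing
    {X : Type*} [NormedAddCommGroup X] [NormedSpace ℝ X] [CompleteSpace X]
    (A : ℕ → X →L[ℝ] X) (C lam : ℝ) (hC : 0 < C) (hlam : 0 < lam)
    (h : ExpDichotomyN A C lam) :
    ∃ L : ℝ, 0 < L ∧ ∀ ε : ℝ, 0 < ε → ∀ y : ℕ → X,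
      (∀ n : ℕ, ‖y (n + 1) - A n (y n)‖ ≤ L * ε) →
      ∃ x : ℕ → X, (∀ n : ℕ, x (n + 1) = A n (x n)) ∧
        ∀ n : ℕ, ‖x n - y n‖ ≤ ε := by
  obtain ⟨P, hproj, hcomm, hbij, hfor, hback⟩ := h
  -- basic facts
  have hPP : ∀ n (z : X), P n (P n z) = P n z := by
    intro n z
    rw [← ContinuousLinearMap.comp_apply, hproj n]
  have hPmem : ∀ n (z : X), z - P n z ∈ LinearMap.ker (P n : X →ₗ[ℝ] X) := by
    intro n z
    simp only [LinearMap.mem_ker, ContinuousLinearMap.coe_coe, map_sub, hPP, sub_self]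
  -- bijectivity of the products on kernels
  have hbijN : ∀ n m : ℕ, n ≤ m →
      Set.BijOn (calAN A m n) (LinearMap.ker (P n : X →ₗ[ℝ] X) : Set X)
        (LinearMap.ker (P m : X →ₗ[ℝ] X) : Set X) := by
    intro n m hnm
    induction m, hnm using Nat.le_induction with
    | base => rw [calAN_self]; exact Set.bijOn_id _
    | succ m hm ih =>
      rw [calAN_succ_left A hm]
      rw [ContinuousLinearMap.coe_comp']
      exact (hbij m).comp ih
  -- the implicit inverse operators
  have hex : ∀ n k : ℕ, n ≤ k → ∀ z : X,
      ∃ w, w ∈ LinearMap.ker (P n : X →ₗ[ℝ] X) ∧ calAN A k n w = z - P k z := by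
    intro n k hnk z
    obtain ⟨w, hw, hweq⟩ := (hbijN n k hnk).surjOn (hPmem k z)
    exact ⟨w, hw, hweq⟩
  choose B0 hBker hBeq using hex
  set B : ℕ → ℕ → X → X := fun n k z => if h : n ≤ k then B0 n k h z else 0 with hBdef
  have hBker' : ∀ n k (h : n ≤ k) (z : X), B n k z ∈ LinearMap.ker (P n : X →ₗ[ℝ] X) := by
    intro n k h z; simp only [hBdef, dif_pos h]; exact hBker n k h z
  have hBeq' : ∀ n k (h : n ≤ k) (z : X), calAN A k n (B n k z) = z - P k z := by
    intro n k h z; simp only [hBdef, dif_pos h]; exact hBeq n k h z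
  have hBuniq : ∀ n k (h : n ≤ k) (z w : X), w ∈ LinearMap.ker (P n : X →ₗ[ℝ] X) →
      calAN A k n w = z - P k z → w = B n k z := by
    intro n k hnk z w hw hweq
    exact (hbijN n k hnk).injOn hw (hBker' n k hnk z) (hweq.trans (hBeq' n k hnk z).symm)
  have hBnorm : ∀ n k (h : n ≤ k) (z : X),
      ‖B n k z‖ ≤ C * Real.exp (-lam * ((k : ℝ) - n)) * ‖z‖ := by
    intro n k hnk z
    exact hback n k hnk z _ (hBker' n k hnk z) (hBeq' n k hnk z)
  have hBdiag : ∀ n (z : X), B n n z = z - P n z := by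
    intro n z
    exact (hBuniq n n le_rfl z _ (hPmem n z) (by rw [calAN_self]; rfl)).symm
  have hBshift : ∀ n k, n + 1 ≤ k → ∀ z : X, A n (B n k z) = B (n + 1) k z := by
    intro n k hk z
    refine hBuniq (n + 1) k hk z _ ((hbij n).mapsTo (hBker' n k (by omega) z)) ?_
    rw [← ContinuousLinearMap.comp_apply, ← calAN_succ_right A (by omega : n < k),
      hBeq' n k (by omega)]
  -- constants
  set r : ℝ := Real.exp (-lam) with hrdef
  have hr0 : 0 < r := Real.exp_pos _
  have hr1 : r < 1 := by
    rw [hrdef, show (1 : ℝ) = Real.exp 0 from (Real.exp_zero).symm]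
    exact Real.exp_lt_exp.mpr (by linarith)
  have hgeom : Summable (fun j : ℕ => r ^ j) := summable_geometric_of_lt_one hr0.le hr1
  have hexp_pow : ∀ a b : ℕ, b ≤ a → Real.exp (-lam * ((a : ℝ) - b)) = r ^ (a - b) := by
    intro a b hba
    rw [hrdef, ← Real.exp_nat_mul]
    congr 1
    have : ((a - b : ℕ) : ℝ) = (a : ℝ) - b := by
      push_cast [hba]; ring
    rw [this]; ring
  refine ⟨(1 - r) / (2 * C), div_pos (by linarith) (by linarith), ?_⟩
  intro ε hε y hy
  set L : ℝ := (1 - r) / (2 * C) with hLdef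
  have hL : 0 < L := div_pos (by linarith) (by linarith)
  set z : ℕ → X := fun n => y (n + 1) - A n (y n) with hzdef
  have hz : ∀ n, ‖z n‖ ≤ L * ε := hy
  -- the stable part
  set u : ℕ → X := fun n => ∑ k ∈ Finset.range n, calAN A n (k + 1) (P (k + 1) (z k))
    with hudef
  -- the unstable part
  set f : ℕ → ℕ → X := fun n j => B n (n + j + 1) (z (n + j)) with hfdef
  have hfnorm : ∀ n j, ‖f n j‖ ≤ C * (L * ε) * r * r ^ j := by
    intro n j
    have h1 := hBnorm n (n + j + 1) (by omega) (z (n + j))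
    have h2 : Real.exp (-lam * (((n + j + 1 : ℕ) : ℝ) - n)) = r ^ (j + 1) := by
      rw [hexp_pow (n + j + 1) n (by omega)]
      congr 1; omega
    rw [h2] at h1
    have hrj : (0 : ℝ) < r ^ (j + 1) := pow_pos hr0 _
    calc ‖f n j‖ ≤ C * r ^ (j + 1) * ‖z (n + j)‖ := h1
      _ ≤ C * r ^ (j + 1) * (L * ε) := by
          apply mul_le_mul_of_nonneg_left (hz _) (by positivity)
      _ = C * (L * ε) * r * r ^ j := by ring
  have hsumf : ∀ n, Summable (f n) := by
    intro n
    exact Summable.of_norm_bounded (hgeom.mul_left _) (hfnorm n)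
  set v : ℕ → X := fun n => ∑' j, f n j with hvdef
  -- recursion for u
  have hu_rec : ∀ n, u (n + 1) = A n (u n) + P (n + 1) (z n) := by
    intro n
    have hsum_eq : ∑ k ∈ Finset.range n, calAN A (n + 1) (k + 1) (P (k + 1) (z k))
        = A n (u n) := by
      rw [hudef]
      simp only
      rw [map_sum]
      refine Finset.sum_congr rfl ?_
      intro k hk
      rw [calAN_succ_left A (Nat.succ_le_of_lt (Finset.mem_range.mp hk))]
      rfl
    show ∑ k ∈ Finset.range (n + 1), calAN A (n + 1) (k + 1) (P (k + 1) (z k))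
        = A n (u n) + P (n + 1) (z n)
    rw [Finset.sum_range_succ, calAN_self, hsum_eq]
    rfl
  -- recursion for v
  have hv_rec : ∀ n, A n (v n) = (z n - P (n + 1) (z n)) + v (n + 1) := by
    intro n
    rw [hvdef]
    simp only
    rw [ContinuousLinearMap.map_tsum _ (hsumf n)]
    have hAf : ∀ j, A n (f n j) = B (n + 1) (n + j + 1) (z (n + j)) := by
      intro j
      rw [hfdef]
      exact hBshift n (n + j + 1) (by omega) (z (n + j))
    have hgsum : Summable (fun j => B (n + 1) (n + j + 1) (z (n + j))) := by
      refine Summable.of_norm_bounded (g := fun j => C * (L * ε) * r ^ j) (hgeom.mul_left _) ?_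
      intro j
      have h1 := hBnorm (n + 1) (n + j + 1) (by omega) (z (n + j))
      have h2 : Real.exp (-lam * (((n + j + 1 : ℕ) : ℝ) - (n + 1 : ℕ))) = r ^ j := by
        rw [hexp_pow (n + j + 1) (n + 1) (by omega)]
        congr 1; omega
      rw [h2] at h1
      calc ‖B (n + 1) (n + j + 1) (z (n + j))‖ ≤ C * r ^ j * ‖z (n + j)‖ := h1
        _ ≤ C * r ^ j * (L * ε) := by
            apply mul_le_mul_of_nonneg_left (hz _) (by positivity)
        _ = C * (L * ε) * r ^ j := by ring
    rw [tsum_congr hAf, Summable.tsum_eq_zero_add hgsum]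
    congr 1
    · show B (n + 1) (n + 0 + 1) (z (n + 0)) = z n - P (n + 1) (z n)
      rw [show n + 0 + 1 = n + 1 from rfl, show n + 0 = n from rfl]
      exact hBdiag (n + 1) (z n)
    · refine tsum_congr ?_
      intro j
      show B (n + 1) (n + (j + 1) + 1) (z (n + (j + 1))) = f (n + 1) j
      rw [hfdef]
      simp only
      rw [show n + (j + 1) = n + 1 + j from by omega]
  -- the shadowing orbit
  set x : ℕ → X := fun n => y n - u n + v n with hxdef
  refine ⟨x, ?_, ?_⟩
  · intro n
    have hy' : y (n + 1) = A n (y n) + z n := by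
      show y (n + 1) = A n (y n) + (y (n + 1) - A n (y n)); abel
    have e1 : x (n + 1) = y (n + 1) - u (n + 1) + v (n + 1) := rfl
    have e2 : x n = y n - u n + v n := rfl
    rw [e1, e2, map_add, map_sub, hv_rec n, hu_rec n, hy']
    abel
  · intro n
    -- bound ‖u n‖
    have hu_bound : ‖u n‖ ≤ C * (L * ε) * (1 - r)⁻¹ := by
      have hterm : ∀ k ∈ Finset.range n,
          ‖calAN A n (k + 1) (P (k + 1) (z k))‖ ≤ C * (L * ε) * r ^ (n - 1 - k) := by
        intro k hk
        have hkn : k + 1 ≤ n := Finset.mem_range.mp hk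
        have h1 : ‖calAN A n (k + 1) (P (k + 1) (z k))‖
            ≤ ‖(calAN A n (k + 1)).comp (P (k + 1))‖ * ‖z k‖ := by
          rw [show calAN A n (k + 1) (P (k + 1) (z k))
            = ((calAN A n (k + 1)).comp (P (k + 1))) (z k) from rfl]
          exact ContinuousLinearMap.le_opNorm _ _
        have h2 := hfor n (k + 1) hkn
        have h3 : Real.exp (-lam * ((n : ℝ) - (k + 1 : ℕ))) = r ^ (n - 1 - k) := by
          rw [hexp_pow n (k + 1) hkn]
          congr 1; omega
        rw [h3] at h2
        calc ‖calAN A n (k + 1) (P (k + 1) (z k))‖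
            ≤ ‖(calAN A n (k + 1)).comp (P (k + 1))‖ * ‖z k‖ := h1
          _ ≤ (C * r ^ (n - 1 - k)) * (L * ε) := by
              apply mul_le_mul h2 (hz k) (norm_nonneg _) (by positivity)
          _ = C * (L * ε) * r ^ (n - 1 - k) := by ring
      calc ‖u n‖ ≤ ∑ k ∈ Finset.range n, ‖calAN A n (k + 1) (P (k + 1) (z k))‖ :=
            norm_sum_le _ _
        _ ≤ ∑ k ∈ Finset.range n, C * (L * ε) * r ^ (n - 1 - k) :=
            Finset.sum_le_sum hterm
        _ = C * (L * ε) * ∑ k ∈ Finset.range n, r ^ (n - 1 - k) := by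
            rw [Finset.mul_sum]
        _ = C * (L * ε) * ∑ k ∈ Finset.range n, r ^ k := by
            rw [Finset.sum_range_reflect (fun k => r ^ k) n]
        _ ≤ C * (L * ε) * (1 - r)⁻¹ := by
            apply mul_le_mul_of_nonneg_left _
              (mul_nonneg hC.le (mul_nonneg hL.le hε.le))
            rw [← tsum_geometric_of_lt_one hr0.le hr1]
            exact Summable.sum_le_tsum _ (fun i _ => by positivity) hgeom
    have hv_bound : ‖v n‖ ≤ C * (L * ε) * (1 - r)⁻¹ := by
      have hsn : Summable (fun j => ‖f n j‖) :=
        Summable.of_nonneg_of_le (fun j => norm_nonneg _) (hfnorm n) (hgeom.mul_left _)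
      calc ‖v n‖ ≤ ∑' j, ‖f n j‖ := norm_tsum_le_tsum_norm hsn
        _ ≤ ∑' j, C * (L * ε) * r * r ^ j := Summable.tsum_le_tsum (hfnorm n) hsn (hgeom.mul_left _)
        _ = C * (L * ε) * r * (1 - r)⁻¹ := by
            rw [tsum_mul_left, tsum_geometric_of_lt_one hr0.le hr1]
        _ ≤ C * (L * ε) * 1 * (1 - r)⁻¹ := by
            apply mul_le_mul_of_nonneg_right _ (inv_nonneg.mpr (by linarith))
            apply mul_le_mul_of_nonneg_left hr1.le
              (mul_nonneg hC.le (mul_nonneg hL.le hε.le))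
        _ = C * (L * ε) * (1 - r)⁻¹ := by ring
    have hxy : x n - y n = v n - u n := by rw [hxdef]; simp only; abel
    have hCL : C * L = (1 - r) / 2 := by
      rw [hLdef]; field_simp
    calc ‖x n - y n‖ = ‖v n - u n‖ := by rw [hxy]
      _ ≤ ‖v n‖ + ‖u n‖ := norm_sub_le _ _
      _ ≤ C * (L * ε) * (1 - r)⁻¹ + C * (L * ε) * (1 - r)⁻¹ := add_le_add hv_bound hu_bound
      _ = (C * L) * ε * (1 - r)⁻¹ * 2 := by ring
      _ = ε := by
          have h1r : (1 : ℝ) - r ≠ 0 := by linarith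
          rw [hCL, show (1 - r) / 2 * ε * (1 - r)⁻¹ * 2 = ε * ((1 - r) * (1 - r)⁻¹) from
            by ring, mul_inv_cancel₀ h1r, mul_one]
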